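/- Let X₁ ⊆ X and Y₁ ⊆ Y have the extension property in topological spaces X and Y respectively, e : X₁ → Y₁ a homeomorphism, E = {(x, e(x)) : x ∈ X₁}, and g : E → ℝ a function of the first Baire class. If E is pseudocompact, then there exists a separately continuous function f : X × Y → ℝ with f|_E = g. -/

import Mathlib

open Set Filter Topology
set_option linter.unusedSectionVars false
set_option linter.unusedVariables false
set_option maxHeartbeats 1000000
noncomputable section Stmt7Aux

/-- truncated distance on ℝ -/
def mdist7 (a b : ℝ) : ℝ := min 1 |a - b|

lemma mdist7_nonneg (a b : ℝ) : 0 ≤ mdist7 a b := le_min zero_le_one (abs_nonneg _)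

lemma mdist7_le_one (a b : ℝ) : mdist7 a b ≤ 1 := min_le_left _ _

lemma mdist7_self (a : ℝ) : mdist7 a a = 0 := by simp [mdist7]

lemma mdist7_le_abs (a b : ℝ) : mdist7 a b ≤ |a - b| := min_le_right _ _

lemma abs_le_of_mdist7 {a b c : ℝ} (hc : c < 1) (h : mdist7 a b ≤ c) : |a - b| ≤ c := by
  rcases le_or_gt |a - b| c with h1 | h1
  · exact h1
  · exfalso
    have hm : mdist7 a b = 1 ∨ mdist7 a b = |a-b| := (min_cases 1 |a-b|).imp (fun h => h.1) (fun h => h.1)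
    rcases hm with h2 | h2
    · rw [h2] at h; linarith
    · rw [h2] at h; linarith

lemma mdist7_triangle (a b c : ℝ) : mdist7 a c ≤ mdist7 a b + mdist7 b c := by
  rcases le_or_gt 1 |a - b| with h1 | h1
  · have : mdist7 a b = 1 := min_eq_left h1
    rw [this]
    have := mdist7_le_one a c
    have := mdist7_nonneg b c
    linarith
  rcases le_or_gt 1 |b - c| with h2 | h2
  · have : mdist7 b c = 1 := min_eq_left h2
    rw [this]
    have := mdist7_le_one a c
    have := mdist7_nonneg a b
    linarith
  · have ha : mdist7 a b = |a - b| := min_eq_right h1.le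
    have hb : mdist7 b c = |b - c| := min_eq_right h2.le
    rw [ha, hb]
    calc mdist7 a c ≤ |a - c| := mdist7_le_abs a c
    _ ≤ |a - b| + |b - c| := abs_sub_le a b c

lemma continuous_mdist7 : Continuous fun p : ℝ × ℝ => mdist7 p.1 p.2 := by
  unfold mdist7
  fun_prop

/-- truncated sup-type metric on sequences -/
def Dd7 (z w : ℕ → ℝ) : ℝ := ∑' n, (2⁻¹:ℝ)^n * mdist7 (z n) (w n)

lemma summable_Dd7 (z w : ℕ → ℝ) : Summable (fun n => (2⁻¹:ℝ)^n * mdist7 (z n) (w n)) := by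
  refine Summable.of_nonneg_of_le (fun n => ?_) (fun n => ?_)
    (summable_geometric_of_lt_one (r := (2⁻¹:ℝ)) (by norm_num) (by norm_num))
  · have := mdist7_nonneg (z n) (w n)
    positivity
  · have h1 := mdist7_le_one (z n) (w n)
    have : (0:ℝ) ≤ (2⁻¹:ℝ)^n := by positivity
    nlinarith

lemma Dd7_nonneg (z w : ℕ → ℝ) : 0 ≤ Dd7 z w := by
  apply tsum_nonneg
  intro n
  have := mdist7_nonneg (z n) (w n)
  positivity

lemma Dd7_self (z : ℕ → ℝ) : Dd7 z z = 0 := by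
  simp [Dd7, mdist7_self]

lemma Dd7_eq_zero_of (z w : ℕ → ℝ) (h : ∀ n, z n = w n) : Dd7 z w = 0 := by
  have : z = w := funext h
  rw [this, Dd7_self]

lemma Dd7_triangle (z v w : ℕ → ℝ) : Dd7 z w ≤ Dd7 z v + Dd7 v w := by
  rw [Dd7, Dd7, Dd7, ← Summable.tsum_add (summable_Dd7 z v) (summable_Dd7 v w)]
  apply Summable.tsum_le_tsum _ (summable_Dd7 z w) ((summable_Dd7 z v).add (summable_Dd7 v w))
  intro n
  have h := mdist7_triangle (z n) (v n) (w n)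
  have : (0:ℝ) ≤ (2⁻¹:ℝ)^n := by positivity
  nlinarith

lemma coord_le_Dd7 (z w : ℕ → ℝ) (n : ℕ) : mdist7 (z n) (w n) ≤ 2^n * Dd7 z w := by
  have h : (2⁻¹:ℝ)^n * mdist7 (z n) (w n) ≤ Dd7 z w := by
    apply Summable.le_tsum (summable_Dd7 z w) n
    intro j _
    have := mdist7_nonneg (z j) (w j)
    positivity
  have h2 : (0:ℝ) < 2^n := by positivity
  calc mdist7 (z n) (w n) = 2^n * ((2⁻¹:ℝ)^n * mdist7 (z n) (w n)) := by
        rw [← mul_assoc, ← mul_pow]; norm_num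
  _ ≤ 2^n * Dd7 z w := by nlinarith

lemma continuous_Dd7_comp {T : Type*} [TopologicalSpace T] (a b : ℕ → T → ℝ)
    (ha : ∀ n, Continuous (a n)) (hb : ∀ n, Continuous (b n)) :
    Continuous fun t => Dd7 (fun n => a n t) (fun n => b n t) := by
  apply continuous_tsum (u := fun n => (2⁻¹:ℝ)^n)
  · intro n
    exact (continuous_const.mul (continuous_mdist7.comp ((ha n).prodMk (hb n))))
  · exact summable_geometric_of_lt_one (r := (2⁻¹:ℝ)) (by norm_num) (by norm_num)
  · intro n t
    rw [Real.norm_eq_abs, abs_mul, abs_of_nonneg (by positivity : (0:ℝ) ≤ (2⁻¹:ℝ)^n),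
      abs_of_nonneg (mdist7_nonneg _ _)]
    have h1 := mdist7_le_one (a n t) (b n t)
    have : (0:ℝ) ≤ (2⁻¹:ℝ)^n := by positivity
    nlinarith

end Stmt7Aux

noncomputable section Aux7

variable {X Y : Type*} [TopologicalSpace X] [TopologicalSpace Y]

/-- a 1-Lipschitz fact about `min 1` -/
lemma min1_lip (a b : ℝ) : |min 1 a - min 1 b| ≤ |a - b| := by
  rcases le_total a 1 with h1 | h1 <;> rcases le_total b 1 with h2 | h2
  · rw [min_eq_right h1, min_eq_right h2]
  · rw [min_eq_right h1, min_eq_left h2, abs_le]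
    rcases abs_cases (a - b) with ⟨h, h'⟩ | ⟨h, h'⟩ <;> constructor <;> linarith
  · rw [min_eq_left h1, min_eq_right h2, abs_le]
    rcases abs_cases (a - b) with ⟨h, h'⟩ | ⟨h, h'⟩ <;> constructor <;> linarith
  · rw [min_eq_left h1, min_eq_left h2, abs_le]
    rcases abs_cases (a - b) with ⟨h, h'⟩ | ⟨h, h'⟩ <;> constructor <;> linarith

section Defs

variable (ub : ℕ → X → ℝ) (vb : ℕ → Y → ℝ) (MM : ℕ → ℝ) (A : Set (X × Y))

def dd7 (x : X) (y : Y) : ℝ := Dd7 (fun n => ub n x) (fun n => vb n y)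

def R1 (x : X) : ℝ := ⨅ p : A, Dd7 (fun n => ub n x) (fun n => ub n (p.1).1)

def R2 (y : Y) : ℝ := ⨅ p : A, Dd7 (fun n => vb n y) (fun n => ub n (p.1).1)

def Hx7 (n : ℕ) (x : X) : ℝ := (1 - min 1 (n * R1 ub A x)) * ub n x

def Hy7 (n : ℕ) (y : Y) : ℝ := (1 - min 1 (n * R2 ub vb A y)) * vb n y

def Lam (n : ℕ) : ℝ := 2^n + n * MM n

def AA (n : ℕ) : ℝ := ∑ k ∈ Finset.range (n+1), (Lam MM k + 4)

def eps7 (n : ℕ) : ℝ := (2⁻¹)^n / AA MM (n+1)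

def θ7 (n : ℕ) (t : ℝ) : ℝ :=
  max 0 (min 1 ((t - eps7 MM (n+1)) / (eps7 MM n - eps7 MM (n+1))))

def FF (N : ℕ) (x : X) (y : Y) : ℝ :=
  Hx7 ub A 0 x + ∑ n ∈ Finset.range N,
    (Hx7 ub A (n+1) x - Hx7 ub A n x) * (1 - θ7 MM n (dd7 ub vb x y))

end Defs

section Lems

variable (ub : ℕ → X → ℝ) (vb : ℕ → Y → ℝ) (MM : ℕ → ℝ) (A : Set (X × Y))

lemma Lam_ge_one (hMpos : ∀ n, 0 < MM n) (n : ℕ) : 1 ≤ Lam MM n := by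
  unfold Lam
  have h1 : (1:ℝ) ≤ 2^n := one_le_pow₀ (by norm_num)
  have h2 : (0:ℝ) ≤ n * MM n := mul_nonneg (Nat.cast_nonneg n) (hMpos n).le
  linarith

lemma AA_ge_five (hMpos : ∀ n, 0 < MM n) (n : ℕ) : 5 ≤ AA MM n := by
  unfold AA
  calc (5:ℝ) = Lam MM 0 + 4 := by unfold Lam; norm_num
  _ ≤ ∑ k ∈ Finset.range (n+1), (Lam MM k + 4) := by
      apply Finset.single_le_sum (f := fun k => Lam MM k + 4)
      · intro k _
        have := Lam_ge_one MM hMpos k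
        linarith
      · exact Finset.mem_range.2 (Nat.succ_pos n)

lemma AA_pos (hMpos : ∀ n, 0 < MM n) (n : ℕ) : 0 < AA MM n := by
  have := AA_ge_five MM hMpos n
  linarith

lemma AA_mono (hMpos : ∀ n, 0 < MM n) : Monotone (AA MM) := by
  apply monotone_nat_of_le_succ
  intro n
  unfold AA
  apply Finset.sum_le_sum_of_subset_of_nonneg
  · exact Finset.range_subset_range.2 (by omega)
  · intro k _ _
    have := Lam_ge_one MM hMpos k
    linarith

lemma Lam_le_AA (hMpos : ∀ n, 0 < MM n) {k n : ℕ} (h : k ≤ n) : Lam MM k ≤ AA MM n := by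
  calc Lam MM k ≤ Lam MM k + 4 := by linarith
  _ ≤ AA MM n := by
      unfold AA
      apply Finset.single_le_sum (f := fun k => Lam MM k + 4)
      · intro j _
        have := Lam_ge_one MM hMpos j
        linarith
      · exact Finset.mem_range.2 (by omega)

lemma eps7_pos (hMpos : ∀ n, 0 < MM n) (n : ℕ) : 0 < eps7 MM n := by
  unfold eps7
  apply div_pos (by positivity) (AA_pos MM hMpos (n+1))

lemma eps7_anti (hMpos : ∀ n, 0 < MM n) : StrictAnti (eps7 MM) := by
  apply strictAnti_nat_of_succ_lt
  intro n
  unfold eps7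
  have h1 : (2⁻¹:ℝ)^(n+1) < (2⁻¹)^n := by
    apply pow_lt_pow_right_of_lt_one₀ (by norm_num) (by norm_num) (by omega)
  have h2 : AA MM (n+1) ≤ AA MM (n+2) := AA_mono MM hMpos (by omega)
  have h3 := AA_pos MM hMpos (n+1)
  have h4 := AA_pos MM hMpos (n+2)
  calc (2⁻¹:ℝ)^(n+1) / AA MM (n+2) ≤ (2⁻¹)^(n+1) / AA MM (n+1) := by gcongr
  _ < (2⁻¹)^n / AA MM (n+1) := by gcongr

lemma eps7_le (hMpos : ∀ n, 0 < MM n) (n : ℕ) : eps7 MM n ≤ (2⁻¹)^n := by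
  unfold eps7
  apply div_le_self (by positivity)
  have := AA_ge_five MM hMpos (n+1)
  linarith

lemma eps7_tendsto (hMpos : ∀ n, 0 < MM n) : Tendsto (eps7 MM) atTop (𝓝 0) := by
  apply squeeze_zero (fun n => (eps7_pos MM hMpos n).le) (eps7_le MM hMpos)
  apply tendsto_pow_atTop_nhds_zero_of_lt_one (by norm_num) (by norm_num)

lemma mdist7_comm (a b : ℝ) : mdist7 a b = mdist7 b a := by
  unfold mdist7; rw [abs_sub_comm]

lemma Dd7_comm (z w : ℕ → ℝ) : Dd7 z w = Dd7 w z := by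
  unfold Dd7
  exact tsum_congr (fun n => by rw [mdist7_comm])

def Rgen (ub : ℕ → X → ℝ) (A : Set (X × Y)) (z : ℕ → ℝ) : ℝ :=
  ⨅ p : A, Dd7 z (fun n => ub n (p.1).1)

lemma Rgen_bdd (ub : ℕ → X → ℝ) (A : Set (X × Y)) (z : ℕ → ℝ) :
    BddBelow (Set.range fun p : A => Dd7 z (fun n => ub n (p.1).1)) := by
  refine ⟨0, ?_⟩
  rintro _ ⟨p, rfl⟩
  exact Dd7_nonneg _ _

lemma Rgen_nonneg (ub : ℕ → X → ℝ) (A : Set (X × Y)) [Nonempty A] (z : ℕ → ℝ) :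
    0 ≤ Rgen ub A z :=
  le_ciInf (fun p => Dd7_nonneg _ _)

lemma Rgen_le_add (ub : ℕ → X → ℝ) (A : Set (X × Y)) [Nonempty A] (z w : ℕ → ℝ) :
    Rgen ub A z ≤ Dd7 z w + Rgen ub A w := by
  have h : ∀ p : A, Rgen ub A z ≤ Dd7 z w + Dd7 w (fun n => ub n (p.1).1) := by
    intro p
    exact le_trans (ciInf_le (Rgen_bdd ub A z) p) (Dd7_triangle _ _ _)
  have h2 : Rgen ub A z - Dd7 z w ≤ Rgen ub A w :=
    le_ciInf (fun p => by linarith [h p])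
  linarith

lemma Rgen_diff (ub : ℕ → X → ℝ) (A : Set (X × Y)) [Nonempty A] (z w : ℕ → ℝ) :
    |Rgen ub A z - Rgen ub A w| ≤ Dd7 z w := by
  rw [abs_le]
  constructor
  · have := Rgen_le_add ub A w z
    rw [Dd7_comm w z] at this
    linarith
  · have := Rgen_le_add ub A z w
    linarith

lemma R1_eq (ub : ℕ → X → ℝ) (A : Set (X × Y)) (x : X) :
    R1 ub A x = Rgen ub A (fun n => ub n x) := rfl

lemma R2_eq (ub : ℕ → X → ℝ) (vb : ℕ → Y → ℝ) (A : Set (X × Y)) (y : Y) :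
    R2 ub vb A y = Rgen ub A (fun n => vb n y) := rfl

lemma R1_nonneg (ub : ℕ → X → ℝ) (A : Set (X × Y)) [Nonempty A] (x : X) :
    0 ≤ R1 ub A x := Rgen_nonneg ub A _

lemma R2_nonneg (ub : ℕ → X → ℝ) (vb : ℕ → Y → ℝ) (A : Set (X × Y)) [Nonempty A] (y : Y) :
    0 ≤ R2 ub vb A y := Rgen_nonneg ub A _

lemma R1_cont (ub : ℕ → X → ℝ) (A : Set (X × Y)) [Nonempty A]
    (hubc : ∀ n, Continuous (ub n)) : Continuous (R1 ub A) := by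
  rw [continuous_iff_continuousAt]
  intro x0
  rw [ContinuousAt, tendsto_iff_dist_tendsto_zero]
  apply squeeze_zero (g := fun x => Dd7 (fun n => ub n x) (fun n => ub n x0))
    (fun x => dist_nonneg)
  · intro x
    rw [Real.dist_eq]
    exact Rgen_diff ub A _ _
  · have hc : Continuous fun x => Dd7 (fun n => ub n x) (fun n => ub n x0) :=
      continuous_Dd7_comp _ _ hubc (fun n => continuous_const)
    have := hc.tendsto' x0 0 (Dd7_self _)
    exact this

lemma R2_cont (ub : ℕ → X → ℝ) (vb : ℕ → Y → ℝ) (A : Set (X × Y)) [Nonempty A]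
    (hvbc : ∀ n, Continuous (vb n)) : Continuous (R2 ub vb A) := by
  rw [continuous_iff_continuousAt]
  intro y0
  rw [ContinuousAt, tendsto_iff_dist_tendsto_zero]
  apply squeeze_zero (g := fun y => Dd7 (fun n => vb n y) (fun n => vb n y0))
    (fun y => dist_nonneg)
  · intro y
    rw [Real.dist_eq]
    exact Rgen_diff ub A _ _
  · have hc : Continuous fun y => Dd7 (fun n => vb n y) (fun n => vb n y0) :=
      continuous_Dd7_comp _ _ hvbc (fun n => continuous_const)
    exact hc.tendsto' y0 0 (Dd7_self _)

lemma R12_diff (ub : ℕ → X → ℝ) (vb : ℕ → Y → ℝ) (A : Set (X × Y)) [Nonempty A]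
    (x : X) (y : Y) : |R1 ub A x - R2 ub vb A y| ≤ dd7 ub vb x y :=
  Rgen_diff ub A _ _

lemma dd7_nonneg (ub : ℕ → X → ℝ) (vb : ℕ → Y → ℝ) (x : X) (y : Y) :
    0 ≤ dd7 ub vb x y := Dd7_nonneg _ _

lemma dd7_cont (ub : ℕ → X → ℝ) (vb : ℕ → Y → ℝ)
    (hubc : ∀ n, Continuous (ub n)) (hvbc : ∀ n, Continuous (vb n)) :
    Continuous fun p : X × Y => dd7 ub vb p.1 p.2 :=
  continuous_Dd7_comp _ _ (fun n => (hubc n).comp continuous_fst)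
    (fun n => (hvbc n).comp continuous_snd)

lemma Hx7_cont (ub : ℕ → X → ℝ) (A : Set (X × Y)) [Nonempty A]
    (hubc : ∀ n, Continuous (ub n)) (n : ℕ) : Continuous (Hx7 ub A n) := by
  unfold Hx7
  exact (continuous_const.sub (continuous_const.min
    (continuous_const.mul (R1_cont ub A hubc)))).mul (hubc n)

lemma Hy7_cont (ub : ℕ → X → ℝ) (vb : ℕ → Y → ℝ) (A : Set (X × Y)) [Nonempty A]
    (hubc : ∀ n, Continuous (ub n)) (hvbc : ∀ n, Continuous (vb n)) (n : ℕ) :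
    Continuous (Hy7 ub vb A n) := by
  unfold Hy7
  exact (continuous_const.sub (continuous_const.min
    (continuous_const.mul (R2_cont ub vb A hvbc)))).mul (hvbc n)

lemma Hdiff (ub : ℕ → X → ℝ) (vb : ℕ → Y → ℝ) (MM : ℕ → ℝ) (A : Set (X × Y)) [Nonempty A]
    (hvbM : ∀ n y, |vb n y| ≤ MM n) (n : ℕ) (x : X) (y : Y) :
    |Hx7 ub A n x - Hy7 ub vb A n y| ≤
      |ub n x - vb n y| + ((n : ℝ) * |R1 ub A x - R2 ub vb A y|) * MM n := by
  set m1 := min 1 ((n:ℝ) * R1 ub A x) with hm1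
  set m2 := min 1 ((n:ℝ) * R2 ub vb A y) with hm2
  have h1 : |m1 - m2| ≤ (n:ℝ) * |R1 ub A x - R2 ub vb A y| := by
    refine le_trans (min1_lip _ _) ?_
    rw [← mul_sub, abs_mul, abs_of_nonneg (Nat.cast_nonneg n)]
  have hm1a : 0 ≤ m1 := le_min zero_le_one
    (mul_nonneg (Nat.cast_nonneg n) (R1_nonneg ub A x))
  have hm1b : m1 ≤ 1 := min_le_left _ _
  have key : Hx7 ub A n x - Hy7 ub vb A n y
      = (1 - m1) * (ub n x - vb n y) + (m2 - m1) * vb n y := by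
    unfold Hx7 Hy7
    rw [← hm1, ← hm2]
    ring
  calc |Hx7 ub A n x - Hy7 ub vb A n y|
      ≤ |(1 - m1) * (ub n x - vb n y)| + |(m2 - m1) * vb n y| := by
        rw [key]; exact abs_add_le _ _
  _ ≤ |ub n x - vb n y| + ((n : ℝ) * |R1 ub A x - R2 ub vb A y|) * MM n := by
      rw [abs_mul, abs_mul]
      have e1 : |1 - m1| ≤ 1 := by rw [abs_le]; constructor <;> linarith
      have e2 : |m2 - m1| = |m1 - m2| := abs_sub_comm _ _
      have e3 := hvbM n y
      have e4 : |(1 - m1)| * |ub n x - vb n y| ≤ 1 * |ub n x - vb n y| :=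
        mul_le_mul_of_nonneg_right e1 (abs_nonneg _)
      have e5 : |m2 - m1| * |vb n y| ≤ ((n : ℝ) * |R1 ub A x - R2 ub vb A y|) * MM n := by
        apply mul_le_mul (e2 ▸ h1) e3 (abs_nonneg _)
        positivity
      linarith

lemma coord_diff (ub : ℕ → X → ℝ) (vb : ℕ → Y → ℝ) {c : ℝ} (hc : c < 1) (n : ℕ) (x : X) (y : Y)
    (h : 2^n * dd7 ub vb x y ≤ c) : |ub n x - vb n y| ≤ c := by
  apply abs_le_of_mdist7 hc
  exact le_trans (coord_le_Dd7 (fun n => ub n x) (fun n => vb n y) n) h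

lemma Hzero (ub : ℕ → X → ℝ) (vb : ℕ → Y → ℝ) (MM : ℕ → ℝ) (A : Set (X × Y)) [Nonempty A]
    (hvbM : ∀ n y, |vb n y| ≤ MM n) (n : ℕ) {x : X} {y : Y} (h : dd7 ub vb x y = 0) :
    Hx7 ub A n x = Hy7 ub vb A n y := by
  have h1 : |ub n x - vb n y| ≤ 0 := by
    apply coord_diff ub vb (by norm_num : (0:ℝ) < 1) n x y
    rw [h, mul_zero]
  have h2 : |R1 ub A x - R2 ub vb A y| ≤ 0 := by
    rw [← h]; exact R12_diff ub vb A x y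
  have h3 := Hdiff ub vb MM A hvbM n x y
  have h1' : |ub n x - vb n y| = 0 := le_antisymm h1 (abs_nonneg _)
  have h2' : |R1 ub A x - R2 ub vb A y| = 0 := le_antisymm h2 (abs_nonneg _)
  rw [h1', h2', mul_zero, zero_mul, add_zero] at h3
  have h4 : |Hx7 ub A n x - Hy7 ub vb A n y| ≤ 0 := h3
  have := abs_nonneg (Hx7 ub A n x - Hy7 ub vb A n y)
  have : |Hx7 ub A n x - Hy7 ub vb A n y| = 0 := le_antisymm h4 this
  have := abs_eq_zero.1 this
  linarith

lemma Hclose (ub : ℕ → X → ℝ) (vb : ℕ → Y → ℝ) (MM : ℕ → ℝ) (A : Set (X × Y)) [Nonempty A]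
    (hMpos : ∀ n, 0 < MM n) (hvbM : ∀ n y, |vb n y| ≤ MM n)
    {n k : ℕ} (hk : k ≤ n + 1) {x : X} {y : Y} (hd : dd7 ub vb x y ≤ eps7 MM n) :
    |Hx7 ub A k x - Hy7 ub vb A k y| ≤ (2⁻¹)^n := by
  have hAA := AA_ge_five MM hMpos (n+1)
  have hApos := AA_pos MM hMpos (n+1)
  have h2k2 : (2:ℝ)^k * (2⁻¹)^n ≤ 2 := by
    have ha : (2:ℝ)^k ≤ 2^(n+1) := pow_le_pow_right₀ one_le_two hk
    have hb : (2:ℝ)^(n+1) * (2⁻¹)^n = 2 := by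
      rw [pow_succ]
      have : (2:ℝ)^n * (2⁻¹)^n = 1 := by rw [← mul_pow]; norm_num
      nlinarith
    have hc : (0:ℝ) ≤ (2⁻¹)^n := by positivity
    nlinarith
  have hceps : (2:ℝ)^k * eps7 MM n < 1 := by
    unfold eps7
    rw [← mul_div_assoc]
    rw [div_lt_one hApos]
    linarith
  have hub : |ub k x - vb k y| ≤ 2^k * eps7 MM n := by
    apply coord_diff ub vb hceps
    have : (2:ℝ)^k * dd7 ub vb x y ≤ 2^k * eps7 MM n :=
      mul_le_mul_of_nonneg_left hd (by positivity)
    exact this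
  have hR : |R1 ub A x - R2 ub vb A y| ≤ eps7 MM n :=
    le_trans (R12_diff ub vb A x y) hd
  have heps_nn : 0 ≤ eps7 MM n := (eps7_pos MM hMpos n).le
  calc |Hx7 ub A k x - Hy7 ub vb A k y|
      ≤ |ub k x - vb k y| + ((k : ℝ) * |R1 ub A x - R2 ub vb A y|) * MM k :=
        Hdiff ub vb MM A hvbM k x y
  _ ≤ 2^k * eps7 MM n + ((k : ℝ) * eps7 MM n) * MM k := by
      have : ((k : ℝ) * |R1 ub A x - R2 ub vb A y|) * MM k
          ≤ ((k : ℝ) * eps7 MM n) * MM k := by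
        apply mul_le_mul_of_nonneg_right _ (hMpos k).le
        exact mul_le_mul_of_nonneg_left hR (Nat.cast_nonneg k)
      linarith
  _ = Lam MM k * eps7 MM n := by unfold Lam; ring
  _ ≤ AA MM (n+1) * eps7 MM n :=
      mul_le_mul_of_nonneg_right (Lam_le_AA MM hMpos hk) heps_nn
  _ = (2⁻¹)^n := by
      unfold eps7
      field_simp

lemma θ7_cont (MM : ℕ → ℝ) (n : ℕ) : Continuous (θ7 MM n) := by
  unfold θ7
  fun_prop

lemma θ7_nonneg (MM : ℕ → ℝ) (n : ℕ) (t : ℝ) : 0 ≤ θ7 MM n t := le_max_left _ _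

lemma θ7_le_one (MM : ℕ → ℝ) (n : ℕ) (t : ℝ) : θ7 MM n t ≤ 1 :=
  max_le zero_le_one (min_le_left _ _)

lemma θ7_eq_zero (MM : ℕ → ℝ) (hMpos : ∀ n, 0 < MM n) {n : ℕ} {t : ℝ}
    (h : t ≤ eps7 MM (n+1)) : θ7 MM n t = 0 := by
  unfold θ7
  have hden : 0 < eps7 MM n - eps7 MM (n+1) := by
    have := eps7_anti MM hMpos (by omega : n < n + 1)
    linarith
  have hq : (t - eps7 MM (n+1)) / (eps7 MM n - eps7 MM (n+1)) ≤ 0 :=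
    div_nonpos_of_nonpos_of_nonneg (by linarith) hden.le
  rw [max_eq_left (le_trans (min_le_right _ _) hq)]

lemma θ7_eq_one (MM : ℕ → ℝ) (hMpos : ∀ n, 0 < MM n) {n : ℕ} {t : ℝ}
    (h : eps7 MM n ≤ t) : θ7 MM n t = 1 := by
  unfold θ7
  have hden : 0 < eps7 MM n - eps7 MM (n+1) := by
    have := eps7_anti MM hMpos (by omega : n < n + 1)
    linarith
  have hq : (1:ℝ) ≤ (t - eps7 MM (n+1)) / (eps7 MM n - eps7 MM (n+1)) := by
    rw [le_div_iff₀ hden]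
    linarith
  rw [min_eq_left hq, max_eq_right zero_le_one]

lemma FF_contx (ub : ℕ → X → ℝ) (vb : ℕ → Y → ℝ) (MM : ℕ → ℝ) (A : Set (X × Y)) [Nonempty A]
    (hubc : ∀ n, Continuous (ub n)) (hvbc : ∀ n, Continuous (vb n)) (N : ℕ) (y : Y) :
    Continuous fun x => FF ub vb MM A N x y := by
  unfold FF
  apply Continuous.add ((Hx7_cont ub A hubc 0))
  apply continuous_finset_sum
  intro n _
  apply Continuous.mul
  · exact (Hx7_cont ub A hubc (n+1)).sub (Hx7_cont ub A hubc n)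
  · apply Continuous.sub continuous_const
    exact (θ7_cont MM n).comp ((dd7_cont ub vb hubc hvbc).comp
      (continuous_id.prodMk continuous_const))

lemma FF_conty (ub : ℕ → X → ℝ) (vb : ℕ → Y → ℝ) (MM : ℕ → ℝ) (A : Set (X × Y)) [Nonempty A]
    (hubc : ∀ n, Continuous (ub n)) (hvbc : ∀ n, Continuous (vb n)) (N : ℕ) (x : X) :
    Continuous fun y => FF ub vb MM A N x y := by
  unfold FF
  apply Continuous.add continuous_const
  apply continuous_finset_sum
  intro n _
  apply Continuous.mul continuous_const
  apply Continuous.sub continuous_const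
  exact (θ7_cont MM n).comp ((dd7_cont ub vb hubc hvbc).comp
    (continuous_const.prodMk continuous_id))

lemma FF_stab (ub : ℕ → X → ℝ) (vb : ℕ → Y → ℝ) (MM : ℕ → ℝ) (A : Set (X × Y))
    (hMpos : ∀ n, 0 < MM n) {N N' : ℕ} (h : N ≤ N') {x : X} {y : Y}
    (hd : eps7 MM N ≤ dd7 ub vb x y) : FF ub vb MM A N' x y = FF ub vb MM A N x y := by
  unfold FF
  congr 1
  symm
  apply Finset.sum_subset (Finset.range_subset_range.2 h)
  intro n hn hnotin
  rw [Finset.mem_range] at hn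
  rw [Finset.mem_range, not_lt] at hnotin
  have : eps7 MM n ≤ dd7 ub vb x y :=
    le_trans ((eps7_anti MM hMpos).antitone hnotin) hd
  rw [θ7_eq_one MM hMpos this, sub_self, mul_zero]

lemma FF_zero (ub : ℕ → X → ℝ) (vb : ℕ → Y → ℝ) (MM : ℕ → ℝ) (A : Set (X × Y))
    (hMpos : ∀ n, 0 < MM n) {x : X} {y : Y} (hd : dd7 ub vb x y = 0) (N : ℕ) :
    FF ub vb MM A N x y = Hx7 ub A N x := by
  unfold FF
  have hsum : ∀ n ∈ Finset.range N,
      (Hx7 ub A (n+1) x - Hx7 ub A n x) * (1 - θ7 MM n (dd7 ub vb x y))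
        = Hx7 ub A (n+1) x - Hx7 ub A n x := by
    intro n _
    have h0 : θ7 MM n (dd7 ub vb x y) = 0 := by
      apply θ7_eq_zero MM hMpos
      rw [hd]
      exact (eps7_pos MM hMpos (n+1)).le
    rw [h0, sub_zero, mul_one]
  rw [Finset.sum_congr rfl hsum, Finset.sum_range_sub (fun m => Hx7 ub A m x)]
  ring

lemma FF_strip (ub : ℕ → X → ℝ) (vb : ℕ → Y → ℝ) (MM : ℕ → ℝ) (A : Set (X × Y))
    (hMpos : ∀ n, 0 < MM n) {n : ℕ} {x : X} {y : Y}
    (hd2 : dd7 ub vb x y ≤ eps7 MM n) :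
    FF ub vb MM A (n+1) x y = Hx7 ub A n x
      + (Hx7 ub A (n+1) x - Hx7 ub A n x) * (1 - θ7 MM n (dd7 ub vb x y)) := by
  unfold FF
  rw [Finset.sum_range_succ]
  have hsum : ∀ j ∈ Finset.range n,
      (Hx7 ub A (j+1) x - Hx7 ub A j x) * (1 - θ7 MM j (dd7 ub vb x y))
        = Hx7 ub A (j+1) x - Hx7 ub A j x := by
    intro j hj
    rw [Finset.mem_range] at hj
    have h0 : θ7 MM j (dd7 ub vb x y) = 0 := by
      apply θ7_eq_zero MM hMpos
      exact le_trans hd2 ((eps7_anti MM hMpos).antitone (by omega))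
    rw [h0, sub_zero, mul_one]
  rw [Finset.sum_congr rfl hsum, Finset.sum_range_sub (fun m => Hx7 ub A m x)]
  ring

end Lems

end Aux7
noncomputable section Key7

lemma key7 {A : Type*} [TopologicalSpace A] [Nonempty A]
    (G : ℕ → A → ℝ) (hGc : ∀ n, Continuous (G n))
    (hGconv : ∀ a, ∃ L, Tendsto (fun n => G n a) atTop (𝓝 L))
    (hpc : ∀ Φ : A → ℝ, Continuous Φ → ∃ C, ∀ a, |Φ a| ≤ C)
    (z : ℕ → ℝ) (hz : ∀ δ > 0, ∃ a : A, Dd7 z (fun n => G n a) < δ) :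
    ∃ L, Tendsto z atTop (𝓝 L) := by
  apply cauchySeq_tendsto_of_complete
  by_contra hnc
  rw [Metric.cauchySeq_iff] at hnc
  push_neg at hnc
  obtain ⟨ε, hε, hbad⟩ := hnc
  choose k hk l hl hkl using hbad
  -- the recursive sequence of starting indices
  set NN : ℕ → ℕ := fun i => Nat.rec 0 (fun p prev => max (k prev) (l prev) + 1) i with hNN
  have hNNsucc : ∀ i, NN (i+1) = max (k (NN i)) (l (NN i)) + 1 := fun i => rfl
  have hkltN : ∀ i, k (NN i) < NN (i+1) ∧ l (NN i) < NN (i+1) := by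
    intro i
    rw [hNNsucc]
    constructor
    · exact Nat.lt_succ_of_le (le_max_left _ _)
    · exact Nat.lt_succ_of_le (le_max_right _ _)
  have hNNmono : StrictMono NN := by
    apply strictMono_nat_of_lt_succ
    intro i
    calc NN i ≤ k (NN i) := hk _
    _ < NN (i+1) := (hkltN i).1
  -- index pairs
  set ki : ℕ → ℕ := fun i => k (NN i) with hki
  set li : ℕ → ℕ := fun i => l (NN i) with hli
  have hkige : ∀ i, NN i ≤ ki i := fun i => hk _
  have hlige : ∀ i, NN i ≤ li i := fun i => hl _
  have hsep : ∀ i, ε ≤ |z (ki i) - z (li i)| := by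
    intro i
    have := hkl (NN i)
    rwa [Real.dist_eq] at this
  have hkilt : ∀ i m, i < m → ki i < NN m ∧ li i < NN m := by
    intro i m him
    have h1 : NN (i+1) ≤ NN m := hNNmono.monotone him
    exact ⟨lt_of_lt_of_le (hkltN i).1 h1, lt_of_lt_of_le (hkltN i).2 h1⟩
  -- the bump factors
  set sm : ℕ → A → ℝ := fun i a => |G (ki i) a - z (ki i)| + |G (li i) a - z (li i)| with hsm
  set β : ℕ → A → ℝ := fun i a => max 0 (min 1 (2 - (8/ε) * sm i a)) with hβ
  have hsmcont : ∀ i, Continuous (sm i) := by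
    intro i
    apply Continuous.add
    · exact ((hGc (ki i)).sub continuous_const).abs
    · exact ((hGc (li i)).sub continuous_const).abs
  have hβcont : ∀ i, Continuous (β i) := by
    intro i
    apply Continuous.max continuous_const
    apply Continuous.min continuous_const
    exact continuous_const.sub (continuous_const.mul (hsmcont i))
  have hβ0le : ∀ i a, 0 ≤ β i a := fun i a => le_max_left _ _
  have hβle1 : ∀ i a, β i a ≤ 1 := by
    intro i a
    apply max_le (zero_le_one) (min_le_left _ _)
  have hβ1 : ∀ i a, |G (ki i) a - z (ki i)| ≤ ε/16 → |G (li i) a - z (li i)| ≤ ε/16 →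
      β i a = 1 := by
    intro i a h1 h2
    have hs : sm i a ≤ ε/8 := by rw [hsm]; dsimp only; linarith
    have : (1:ℝ) ≤ 2 - (8/ε) * sm i a := by
      have h8 : (8/ε) * sm i a ≤ (8/ε) * (ε/8) := by
        apply mul_le_mul_of_nonneg_left hs (by positivity)
      have : (8/ε) * (ε/8) = 1 := by field_simp
      linarith
    rw [hβ]
    dsimp only
    rw [min_eq_left this, max_eq_right zero_le_one]
  have hβzero : ∀ i a, ε/4 < sm i a → β i a = 0 := by
    intro i a h
    have : 2 - (8/ε) * sm i a ≤ 0 := by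
      have h8 : (8/ε) * (ε/4) ≤ (8/ε) * sm i a := by
        apply mul_le_mul_of_nonneg_left h.le (by positivity)
      have : (8/ε) * (ε/4) = 2 := by field_simp; ring
      linarith
    rw [hβ]
    dsimp only
    rw [max_eq_left (le_trans (min_le_right _ _) this)]
  -- at every point, some factor with margin dies
  have hbig : ∀ a, ∃ i0, ε/2 ≤ sm i0 a := by
    intro a
    obtain ⟨L, hL⟩ := hGconv a
    have hc := hL.cauchySeq
    rw [Metric.cauchySeq_iff] at hc
    obtain ⟨M, hM⟩ := hc (ε/2) (by positivity)
    refine ⟨M, ?_⟩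
    have h1 : M ≤ ki M := le_trans (hNNmono.le_apply) (hkige M)
    have h2 : M ≤ li M := le_trans (hNNmono.le_apply) (hlige M)
    have h3 := hM (ki M) h1 (li M) h2
    rw [Real.dist_eq] at h3
    have h4 := hsep M
    have habs : |z (ki M) - z (li M)| ≤
        |G (ki M) a - z (ki M)| + |G (ki M) a - G (li M) a| + |G (li M) a - z (li M)| := by
      have := abs_sub_le (z (ki M)) (G (ki M) a) (z (li M))
      have := abs_sub_le (G (ki M) a) (G (li M) a) (z (li M))
      have e1 : |z (ki M) - G (ki M) a| = |G (ki M) a - z (ki M)| := abs_sub_comm _ _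
      have e2 : |G (li M) a - z (li M)| = |z (li M) - G (li M) a| := abs_sub_comm _ _
      calc |z (ki M) - z (li M)| ≤ |z (ki M) - G (ki M) a| + |G (ki M) a - z (li M)| :=
            abs_sub_le _ _ _
      _ ≤ |z (ki M) - G (ki M) a| + (|G (ki M) a - G (li M) a| + |G (li M) a - z (li M)|) := by
            have := abs_sub_le (G (ki M) a) (G (li M) a) (z (li M))
            linarith
      _ = |G (ki M) a - z (ki M)| + |G (ki M) a - G (li M) a| + |G (li M) a - z (li M)| := by
            rw [e1]; ring
    rw [hsm]; dsimp only
    linarith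
  -- the unbounded function
  set Φ : A → ℝ := fun a => ∑' i : ℕ, (i:ℝ) * ∏ j ∈ Finset.range (i+1), β j a with hΦ
  have htermnn : ∀ (a : A) (i : ℕ), 0 ≤ (i:ℝ) * ∏ j ∈ Finset.range (i+1), β j a := by
    intro a i
    apply mul_nonneg (Nat.cast_nonneg i)
    exact Finset.prod_nonneg (fun j _ => hβ0le j a)
  have hvanish : ∀ a i0, β i0 a = 0 → ∀ i, i0 ≤ i →
      (i:ℝ) * ∏ j ∈ Finset.range (i+1), β j a = 0 := by
    intro a i0 h0 i hii
    have : ∏ j ∈ Finset.range (i+1), β j a = 0 :=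
      Finset.prod_eq_zero (Finset.mem_range.2 (Nat.lt_succ_of_le hii)) h0
    rw [this, mul_zero]
  have hsummable : ∀ a : A, Summable (fun i : ℕ => (i:ℝ) * ∏ j ∈ Finset.range (i+1), β j a) := by
    intro a
    obtain ⟨i0, hi0⟩ := hbig a
    have h0 : β i0 a = 0 := hβzero i0 a (by linarith)
    apply summable_of_ne_finset_zero (s := Finset.range (i0+1))
    intro i hi
    rw [Finset.mem_range, not_lt] at hi
    exact hvanish a i0 h0 i (le_trans (Nat.le_succ i0) hi)
  have hΦcont : Continuous Φ := by
    rw [continuous_iff_continuousAt]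
    intro a0
    obtain ⟨i0, hi0⟩ := hbig a0
    have hopen : IsOpen {a | ε/4 < sm i0 a} := isOpen_lt continuous_const (hsmcont i0)
    have hmem : a0 ∈ {a | ε/4 < sm i0 a} := by
      simp only [mem_setOf_eq]; linarith
    have hnb : {a | ε/4 < sm i0 a} ∈ 𝓝 a0 := hopen.mem_nhds hmem
    have heq : ∀ a ∈ {a | ε/4 < sm i0 a},
        Φ a = ∑ i ∈ Finset.range i0, (i:ℝ) * ∏ j ∈ Finset.range (i+1), β j a := by
      intro a ha
      rw [hΦ]
      dsimp only
      apply tsum_eq_sum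
      intro i hi
      rw [Finset.mem_range, not_lt] at hi
      exact hvanish a i0 (hβzero i0 a ha) i hi
    have hcfin : Continuous fun a => ∑ i ∈ Finset.range i0,
        (i:ℝ) * ∏ j ∈ Finset.range (i+1), β j a := by
      apply continuous_finset_sum
      intro i _
      exact continuous_const.mul (continuous_finset_prod _ (fun j _ => hβcont j))
    apply ContinuousAt.congr hcfin.continuousAt
    filter_upwards [hnb] with a ha
    exact (heq a ha).symm
  obtain ⟨C, hC⟩ := hpc Φ hΦcont
  obtain ⟨m, hm⟩ := exists_nat_gt C
  -- find a point where many factors equal 1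
  set c : ℝ := min (ε/16) 1 / 2 with hc
  have hcpos : 0 < c := by
    rw [hc]
    have : (0:ℝ) < min (ε/16) 1 := lt_min (by positivity) one_pos
    linarith
  set δ : ℝ := (2⁻¹:ℝ)^(NN (m+1)) * c with hδ
  obtain ⟨a, ha⟩ := hz δ (by positivity)
  have hcoord : ∀ n, n < NN (m+1) → |z n - G n a| ≤ ε/16 := by
    intro n hn
    have h1 : mdist7 (z n) (G n a) ≤ 2^n * Dd7 z (fun n => G n a) :=
      coord_le_Dd7 z (fun n => G n a) n
    have h2 : (2:ℝ)^n * Dd7 z (fun n => G n a) < 2^n * δ := by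
      apply mul_lt_mul_of_pos_left ha (by positivity)
    have h3 : (2:ℝ)^n * δ ≤ c := by
      rw [hδ, ← mul_assoc]
      have : (2:ℝ)^n * (2⁻¹:ℝ)^(NN (m+1)) ≤ 1 := by
        have hle : (2:ℝ)^n ≤ (2:ℝ)^(NN (m+1)) := by
          apply pow_le_pow_right₀ (by norm_num) hn.le
        rw [inv_pow, mul_inv_le_iff₀ (by positivity), one_mul]
        exact hle
      nlinarith [hcpos.le]
    have h4 : mdist7 (z n) (G n a) ≤ c := by linarith
    have h5 : c < 1 := by
      rw [hc]
      have : min (ε/16) 1 ≤ 1 := min_le_right _ _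
      linarith
    have h6 := abs_le_of_mdist7 h5 h4
    have h7 : c ≤ ε/16 := by
      rw [hc]
      have : min (ε/16) 1 ≤ ε/16 := min_le_left _ _
      linarith
    exact le_trans h6 h7
  have hβa : ∀ j, j < m + 1 → β j a = 1 := by
    intro j hj
    have h1 := hkilt j (m+1) hj
    apply hβ1
    · have := hcoord (ki j) h1.1
      rwa [abs_sub_comm]
    · have := hcoord (li j) h1.2
      rwa [abs_sub_comm]
  have hΦa : (m:ℝ) ≤ Φ a := by
    have hterm : (m:ℝ) * ∏ j ∈ Finset.range (m+1), β j a = m := by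
      rw [Finset.prod_congr rfl (fun j hj => hβa j (Finset.mem_range.1 hj)),
        Finset.prod_const_one, mul_one]
    calc (m:ℝ) = (m:ℝ) * ∏ j ∈ Finset.range (m+1), β j a := hterm.symm
    _ ≤ Φ a := Summable.le_tsum (hsummable a) m (fun j _ => htermnn a j)
  have := hC a
  have : Φ a ≤ C := le_trans (le_abs_self _) this
  linarith

end Key7

noncomputable section Aux7Main

theorem aux7 {X Y : Type*} [TopologicalSpace X] [TopologicalSpace Y]
    (ub : ℕ → X → ℝ) (vb : ℕ → Y → ℝ) (MM : ℕ → ℝ) (A : Set (X × Y)) [Nonempty A]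
    (hubc : ∀ n, Continuous (ub n)) (hvbc : ∀ n, Continuous (vb n))
    (hMpos : ∀ n, 0 < MM n)
    (hvbM : ∀ n y, |vb n y| ≤ MM n)
    (hagree : ∀ p : A, ∀ n, ub n (p.1).1 = vb n (p.1).2)
    (γ : A → ℝ) (hγ : ∀ p : A, Tendsto (fun n => ub n (p.1).1) atTop (𝓝 (γ p)))
    (hpc : ∀ Φ : A → ℝ, Continuous Φ → ∃ C, ∀ p, |Φ p| ≤ C) :
    ∃ f : X × Y → ℝ, (∀ x, Continuous fun y => f (x, y)) ∧
      (∀ y, Continuous fun x => f (x, y)) ∧ ∀ p : A, f p.1 = γ p := by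
  classical
  have hG : ∀ n, Continuous (fun p : A => ub n (p.1).1) :=
    fun n => (hubc n).comp (continuous_fst.comp continuous_subtype_val)
  have hGconv : ∀ p : A, ∃ L, Tendsto (fun n => ub n (p.1).1) atTop (𝓝 L) :=
    fun p => ⟨γ p, hγ p⟩
  have hRconv : ∀ z : ℕ → ℝ, Rgen ub A z = 0 → ∃ L, Tendsto z atTop (𝓝 L) := by
    intro z hz0
    apply key7 (fun n p => ub n (p.1).1) hG hGconv hpc z
    intro δ hδ
    have hlt : Rgen ub A z < δ := by rw [hz0]; exact hδ
    obtain ⟨p, hp⟩ := exists_lt_of_ciInf_lt hlt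
    exact ⟨p, hp⟩
  have hHxconv : ∀ x : X, ∃ L, Tendsto (fun N => Hx7 ub A N x) atTop (𝓝 L) := by
    intro x
    rcases eq_or_lt_of_le (R1_nonneg ub A x) with h0 | h0
    · obtain ⟨L, hL⟩ := hRconv (fun n => ub n x) h0.symm
      refine ⟨L, hL.congr ?_⟩
      intro N
      unfold Hx7
      rw [← h0]
      norm_num
    · refine ⟨0, ?_⟩
      obtain ⟨N0, hN0⟩ := exists_nat_gt (1 / R1 ub A x)
      apply tendsto_atTop_of_eventually_const (i₀ := N0)
      intro N hN
      unfold Hx7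
      have h1 : (1:ℝ) ≤ (N:ℝ) * R1 ub A x := by
        rw [div_lt_iff₀ h0] at hN0
        have hNN : (N0:ℝ) ≤ (N:ℝ) := Nat.cast_le.2 hN
        nlinarith
      rw [min_eq_left h1, sub_self, zero_mul]
  have hex : ∀ x y, ∃ L, Tendsto (fun N => FF ub vb MM A N x y) atTop (𝓝 L) := by
    intro x y
    rcases eq_or_lt_of_le (dd7_nonneg ub vb x y) with hd | hd
    · obtain ⟨L, hL⟩ := hHxconv x
      exact ⟨L, hL.congr (fun N => (FF_zero ub vb MM A hMpos hd.symm N).symm)⟩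
    · obtain ⟨N0, hN0⟩ : ∃ N0, eps7 MM N0 < dd7 ub vb x y :=
        ((eps7_tendsto MM hMpos).eventually (gt_mem_nhds hd)).exists
      refine ⟨FF ub vb MM A N0 x y, tendsto_atTop_of_eventually_const (i₀ := N0) ?_⟩
      intro N hN
      exact FF_stab ub vb MM A hMpos hN hN0.le
  set f0 : X → Y → ℝ := fun x y => Classical.choose (hex x y) with hf0def
  have hf0 : ∀ x y, Tendsto (fun N => FF ub vb MM A N x y) atTop (𝓝 (f0 x y)) :=
    fun x y => Classical.choose_spec (hex x y)
  have hf0_of_pos : ∀ {x y} (N : ℕ), eps7 MM N ≤ dd7 ub vb x y →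
      f0 x y = FF ub vb MM A N x y := by
    intro x y N h
    refine tendsto_nhds_unique (hf0 x y) (tendsto_atTop_of_eventually_const (i₀ := N) ?_)
    intro N' hN'
    exact FF_stab ub vb MM A hMpos hN' h
  have hHxlim : ∀ {x y}, dd7 ub vb x y = 0 →
      Tendsto (fun N => Hx7 ub A N x) atTop (𝓝 (f0 x y)) := by
    intro x y h
    exact (hf0 x y).congr (fun N => FF_zero ub vb MM A hMpos h N)
  have hstrip : ∀ {x y n}, eps7 MM (n+1) ≤ dd7 ub vb x y → dd7 ub vb x y ≤ eps7 MM n →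
      ∃ s, 0 ≤ s ∧ s ≤ 1 ∧
        f0 x y = Hx7 ub A n x + (Hx7 ub A (n+1) x - Hx7 ub A n x) * s := by
    intro x y n h1 h2
    refine ⟨1 - θ7 MM n (dd7 ub vb x y),
      by linarith [θ7_le_one MM n (dd7 ub vb x y)],
      by linarith [θ7_nonneg MM n (dd7 ub vb x y)], ?_⟩
    rw [hf0_of_pos (n+1) h1]
    exact FF_strip ub vb MM A hMpos h2
  have hfind : ∀ {x y} (N : ℕ), 0 < dd7 ub vb x y → dd7 ub vb x y < eps7 MM N →
      ∃ n, N ≤ n ∧ eps7 MM (n+1) ≤ dd7 ub vb x y ∧ dd7 ub vb x y ≤ eps7 MM n := by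
    intro x y N hpos hlt
    have hex2 : ∃ m, eps7 MM (m+1) ≤ dd7 ub vb x y := by
      obtain ⟨m, hm⟩ := ((eps7_tendsto MM hMpos).eventually (gt_mem_nhds hpos)).exists
      exact ⟨m, le_trans ((eps7_anti MM hMpos).antitone (by omega : m ≤ m + 1)) hm.le⟩
    set n := Nat.find hex2 with hndef
    have hn1 : eps7 MM (n+1) ≤ dd7 ub vb x y := Nat.find_spec hex2
    have hnN : N ≤ n := by
      by_contra hcon
      push_neg at hcon
      have h3 : eps7 MM N ≤ eps7 MM (n+1) := (eps7_anti MM hMpos).antitone (by omega)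
      linarith
    have hn2 : dd7 ub vb x y ≤ eps7 MM n := by
      rcases Nat.eq_zero_or_pos n with h0 | h0
      · have hN0 : N = 0 := by omega
        rw [h0, ← hN0]
        exact hlt.le
      · have hmin := Nat.find_min hex2 (m := n - 1) (by omega)
        push_neg at hmin
        have heq : n - 1 + 1 = n := by omega
        rw [heq] at hmin
        exact hmin.le
    exact ⟨n, hnN, hn1, hn2⟩
  have hddy : ∀ x, Continuous fun y => dd7 ub vb x y :=
    fun x => (dd7_cont ub vb hubc hvbc).comp (continuous_const.prodMk continuous_id)
  have hddx : ∀ y, Continuous fun x => dd7 ub vb x y :=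
    fun y => (dd7_cont ub vb hubc hvbc).comp (continuous_id.prodMk continuous_const)
  refine ⟨fun p => f0 p.1 p.2, ?_, ?_, ?_⟩
  · -- continuity in y for fixed x
    intro x
    show Continuous fun y => f0 x y
    rw [continuous_iff_continuousAt]
    intro y0
    rcases eq_or_lt_of_le (dd7_nonneg ub vb x y0) with hd | hd
    · -- on the zero set
      have hL := hHxlim hd.symm
      rw [ContinuousAt, Metric.tendsto_nhds]
      intro ε hε
      obtain ⟨N1, hN1⟩ := Metric.tendsto_atTop.1 hL (ε/2) (by linarith)
      have hnbhd : {y | dd7 ub vb x y < eps7 MM N1} ∈ 𝓝 y0 := by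
        apply IsOpen.mem_nhds
        · exact isOpen_lt (hddy x) continuous_const
        · show dd7 ub vb x y0 < eps7 MM N1
          rw [← hd]
          exact eps7_pos MM hMpos N1
      filter_upwards [hnbhd] with y hy
      rcases eq_or_lt_of_le (dd7_nonneg ub vb x y) with hd2 | hd2
      · have h2 := hHxlim hd2.symm
        have h3 : f0 x y = f0 x y0 := tendsto_nhds_unique h2 hL
        rw [Real.dist_eq, h3, sub_self, abs_zero]
        exact hε
      · obtain ⟨n, hnN, h1, h2⟩ := hfind N1 hd2 hy
        obtain ⟨s, hs0, hs1, hf⟩ := hstrip h1 h2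
        rw [Real.dist_eq, hf]
        have e1 : |Hx7 ub A n x - f0 x y0| < ε/2 := by
          have := hN1 n hnN; rwa [Real.dist_eq] at this
        have e2 : |Hx7 ub A (n+1) x - f0 x y0| < ε/2 := by
          have := hN1 (n+1) (by omega); rwa [Real.dist_eq] at this
        have hkey : Hx7 ub A n x + (Hx7 ub A (n+1) x - Hx7 ub A n x) * s - f0 x y0
            = (1-s) * (Hx7 ub A n x - f0 x y0) + s * (Hx7 ub A (n+1) x - f0 x y0) := by
          ring
        rw [hkey]
        calc |(1-s) * (Hx7 ub A n x - f0 x y0) + s * (Hx7 ub A (n+1) x - f0 x y0)|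
            ≤ |(1-s) * (Hx7 ub A n x - f0 x y0)| + |s * (Hx7 ub A (n+1) x - f0 x y0)| :=
              abs_add_le _ _
        _ = (1-s) * |Hx7 ub A n x - f0 x y0| + s * |Hx7 ub A (n+1) x - f0 x y0| := by
              rw [abs_mul, abs_mul, abs_of_nonneg (by linarith : (0:ℝ) ≤ 1 - s),
                abs_of_nonneg hs0]
        _ < ε := by nlinarith
    · -- away from the zero set
      obtain ⟨N0, hN0⟩ : ∃ N0, eps7 MM N0 < dd7 ub vb x y0 :=
        ((eps7_tendsto MM hMpos).eventually (gt_mem_nhds hd)).exists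
      have hopen : IsOpen {y | eps7 MM N0 < dd7 ub vb x y} :=
        isOpen_lt continuous_const (hddy x)
      apply ContinuousAt.congr (FF_conty ub vb MM A hubc hvbc N0 x).continuousAt
      filter_upwards [hopen.mem_nhds hN0] with y hy
      exact (hf0_of_pos N0 hy.le).symm
  · -- continuity in x for fixed y
    intro y
    show Continuous fun x => f0 x y
    rw [continuous_iff_continuousAt]
    intro x0
    rcases eq_or_lt_of_le (dd7_nonneg ub vb x0 y) with hd | hd
    · have hL := hHxlim hd.symm
      have hLy : Tendsto (fun N => Hy7 ub vb A N y) atTop (𝓝 (f0 x0 y)) :=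
        hL.congr (fun N => Hzero ub vb MM A hvbM N hd.symm)
      rw [ContinuousAt, Metric.tendsto_nhds]
      intro ε hε
      obtain ⟨N1, hN1⟩ := Metric.tendsto_atTop.1 hLy (ε/4) (by linarith)
      obtain ⟨N2', hN2'⟩ : ∃ N2', (2⁻¹:ℝ)^N2' < ε/4 := by
        have ht : Tendsto (fun n => (2⁻¹:ℝ)^n) atTop (𝓝 0) :=
          tendsto_pow_atTop_nhds_zero_of_lt_one (by norm_num) (by norm_num)
        exact (ht.eventually (gt_mem_nhds (by linarith : (0:ℝ) < ε/4))).exists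
      set N2 := max N1 N2' with hN2def
      have hnbhd : {x | dd7 ub vb x y < eps7 MM N2} ∈ 𝓝 x0 := by
        apply IsOpen.mem_nhds
        · exact isOpen_lt (hddx y) continuous_const
        · show dd7 ub vb x0 y < eps7 MM N2
          rw [← hd]
          exact eps7_pos MM hMpos N2
      filter_upwards [hnbhd] with x hx
      rcases eq_or_lt_of_le (dd7_nonneg ub vb x y) with hd2 | hd2
      · have h2 := hHxlim hd2.symm
        have h3 : Tendsto (fun N => Hy7 ub vb A N y) atTop (𝓝 (f0 x y)) :=
          h2.congr (fun N => Hzero ub vb MM A hvbM N hd2.symm)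
        have h4 : f0 x y = f0 x0 y := tendsto_nhds_unique h3 hLy
        rw [Real.dist_eq, h4, sub_self, abs_zero]
        exact hε
      · obtain ⟨n, hnN, h1, h2⟩ := hfind N2 hd2 hx
        obtain ⟨s, hs0, hs1, hf⟩ := hstrip h1 h2
        rw [Real.dist_eq, hf]
        have hpow : (2⁻¹:ℝ)^n < ε/4 := by
          have : (2⁻¹:ℝ)^n ≤ (2⁻¹)^N2' := by
            apply pow_le_pow_of_le_one (by norm_num) (by norm_num)
            omega
          linarith
        have hcn : |Hx7 ub A n x - Hy7 ub vb A n y| ≤ (2⁻¹:ℝ)^n :=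
          Hclose ub vb MM A hMpos hvbM (by omega) h2
        have hcn1 : |Hx7 ub A (n+1) x - Hy7 ub vb A (n+1) y| ≤ (2⁻¹:ℝ)^n :=
          Hclose ub vb MM A hMpos hvbM (by omega) h2
        have e1 : |Hy7 ub vb A n y - f0 x0 y| < ε/4 := by
          have := hN1 n (le_trans (le_max_left _ _) hnN); rwa [Real.dist_eq] at this
        have e2 : |Hy7 ub vb A (n+1) y - f0 x0 y| < ε/4 := by
          have := hN1 (n+1) (by
            have := le_trans (le_max_left N1 N2') hnN
            omega)
          rwa [Real.dist_eq] at this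
        have f1 : |Hx7 ub A n x - f0 x0 y| < ε/2 := by
          calc |Hx7 ub A n x - f0 x0 y|
              ≤ |Hx7 ub A n x - Hy7 ub vb A n y| + |Hy7 ub vb A n y - f0 x0 y| := by
                have := abs_sub_le (Hx7 ub A n x) (Hy7 ub vb A n y) (f0 x0 y)
                linarith
          _ < ε/2 := by linarith
        have f2 : |Hx7 ub A (n+1) x - f0 x0 y| < ε/2 := by
          calc |Hx7 ub A (n+1) x - f0 x0 y|
              ≤ |Hx7 ub A (n+1) x - Hy7 ub vb A (n+1) y|
                + |Hy7 ub vb A (n+1) y - f0 x0 y| := by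
                have := abs_sub_le (Hx7 ub A (n+1) x) (Hy7 ub vb A (n+1) y) (f0 x0 y)
                linarith
          _ < ε/2 := by linarith
        have hkey : Hx7 ub A n x + (Hx7 ub A (n+1) x - Hx7 ub A n x) * s - f0 x0 y
            = (1-s) * (Hx7 ub A n x - f0 x0 y) + s * (Hx7 ub A (n+1) x - f0 x0 y) := by
          ring
        rw [hkey]
        calc |(1-s) * (Hx7 ub A n x - f0 x0 y) + s * (Hx7 ub A (n+1) x - f0 x0 y)|
            ≤ |(1-s) * (Hx7 ub A n x - f0 x0 y)| + |s * (Hx7 ub A (n+1) x - f0 x0 y)| :=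
              abs_add_le _ _
        _ = (1-s) * |Hx7 ub A n x - f0 x0 y| + s * |Hx7 ub A (n+1) x - f0 x0 y| := by
              rw [abs_mul, abs_mul, abs_of_nonneg (by linarith : (0:ℝ) ≤ 1 - s),
                abs_of_nonneg hs0]
        _ < ε := by nlinarith
    · obtain ⟨N0, hN0⟩ : ∃ N0, eps7 MM N0 < dd7 ub vb x0 y :=
        ((eps7_tendsto MM hMpos).eventually (gt_mem_nhds hd)).exists
      have hopen : IsOpen {x | eps7 MM N0 < dd7 ub vb x y} :=
        isOpen_lt continuous_const (hddx y)
      apply ContinuousAt.congr (FF_contx ub vb MM A hubc hvbc N0 y).continuousAt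
      filter_upwards [hopen.mem_nhds hN0] with x hx
      exact (hf0_of_pos N0 hx.le).symm
  · -- restriction to A
    intro p
    have hd : dd7 ub vb (p.1).1 (p.1).2 = 0 :=
      Dd7_eq_zero_of _ _ (fun n => hagree p n)
    have h1 : Tendsto (fun N => Hx7 ub A N (p.1).1) atTop (𝓝 (f0 (p.1).1 (p.1).2)) :=
      hHxlim hd
    have hR0 : R1 ub A (p.1).1 = 0 := by
      apply le_antisymm _ (R1_nonneg ub A _)
      have hle : R1 ub A (p.1).1 ≤ Dd7 (fun n => ub n (p.1).1) (fun n => ub n (p.1).1) :=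
        ciInf_le (Rgen_bdd ub A _) p
      rw [Dd7_self] at hle
      exact hle
    have h2 : Tendsto (fun N => Hx7 ub A N (p.1).1) atTop (𝓝 (γ p)) := by
      apply (hγ p).congr
      intro N
      unfold Hx7
      rw [hR0]
      norm_num
    exact tendsto_nhds_unique h1 h2

end Aux7Main

theorem stmt7 {X Y : Type*} [TopologicalSpace X] [TopologicalSpace Y]
    (X₁ : Set X) (Y₁ : Set Y)
    (hX₁ : ∀ u : X₁ → ℝ, Continuous u → (∀ a, u a ∈ Icc (0:ℝ) 1) →
      ∃ v : X → ℝ, Continuous v ∧ (∀ x, v x ∈ Icc (0:ℝ) 1) ∧ ∀ a : X₁, v a = u a)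
    (hY₁ : ∀ u : Y₁ → ℝ, Continuous u → (∀ b, u b ∈ Icc (0:ℝ) 1) →
      ∃ v : Y → ℝ, Continuous v ∧ (∀ y, v y ∈ Icc (0:ℝ) 1) ∧ ∀ b : Y₁, v b = u b)
    (e : X₁ ≃ₜ Y₁)
    (E : Set (X × Y)) (hE : E = {p : X × Y | ∃ x : X₁, p = ((x : X), (e x : Y))})
    (g : E → ℝ)
    (hg : ∃ gs : ℕ → E → ℝ, (∀ n, Continuous (gs n)) ∧
      ∀ p : E, Tendsto (fun n => gs n p) atTop (𝓝 (g p)))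
    (hEpc : ∀ u : E → ℝ, Continuous u → ∃ M : ℝ, ∀ p : E, |u p| ≤ M) :
    ∃ f : X × Y → ℝ,
      (∀ x : X, Continuous fun y => f (x, y)) ∧
      (∀ y : Y, Continuous fun x => f (x, y)) ∧
      (∀ p : E, f p = g p) := by
  classical
  obtain ⟨gs, hgs_cont, hgs_tendsto⟩ := hg
  by_cases hne : Nonempty X₁
  swap
  · refine ⟨fun _ => 0, fun x => continuous_const, fun y => continuous_const, ?_⟩
    intro p
    exfalso
    have hp : (p : X × Y) ∈ {q : X × Y | ∃ x : X₁, q = ((x:X), ((e x : Y₁)  : Y))} := by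
      rw [← hE]; exact p.2
    obtain ⟨x, _⟩ := hp
    exact hne ⟨x⟩
  · obtain ⟨x0⟩ := hne
    have hφmem : ∀ x : X₁, ((x : X), (e x : Y)) ∈ E := by
      intro x; rw [hE]; exact ⟨x, rfl⟩
    set φ : X₁ → E := fun x => ⟨((x : X), (e x : Y)), hφmem x⟩ with hφ
    have hφc : Continuous φ := by
      apply Continuous.subtype_mk
      exact continuous_subtype_val.prodMk (continuous_subtype_val.comp e.continuous)
    haveI : Nonempty E := ⟨φ x0⟩
    -- bounds for each gs n
    have hM0ex : ∀ n, ∃ M0, ∀ p : E, |gs n p| ≤ M0 := fun n => hEpc (gs n) (hgs_cont n)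
    choose M0 hM0 using hM0ex
    set MM : ℕ → ℝ := fun n => M0 n + 1 with hMM
    have hMpos : ∀ n, 0 < MM n := by
      intro n
      have h1 := hM0 n (φ x0)
      have h2 := abs_nonneg (gs n (φ x0))
      simp only [hMM]
      linarith
    have hgsle : ∀ n (p : E), |gs n p| ≤ M0 n := hM0
    -- extensions over X
    have hqX : ∀ n, ∃ w : X → ℝ, Continuous w ∧ (∀ x, w x ∈ Icc (0:ℝ) 1) ∧
        ∀ a : X₁, w a = (gs n (φ a) + MM n) / (2 * MM n) := by
      intro n
      apply hX₁
      · exact (((hgs_cont n).comp hφc).add continuous_const).div_const _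
      · intro a
        have h1 := abs_le.1 (hgsle n (φ a))
        have h2 := hMpos n
        have h3 : M0 n < MM n := by simp only [hMM]; linarith
        constructor
        · apply div_nonneg _ (by linarith)
          linarith [h1.1]
        · rw [div_le_one (by linarith)]
          linarith [h1.2]
    choose wX hwXc hwX01 hwXa using hqX
    set ub : ℕ → X → ℝ := fun n x => 2 * MM n * wX n x - MM n with hub
    have hubc : ∀ n, Continuous (ub n) :=
      fun n => (continuous_const.mul (hwXc n)).sub continuous_const
    have hubM : ∀ n x, |ub n x| ≤ MM n := by
      intro n x
      have h1 := (hwX01 n x).1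
      have h2 := (hwX01 n x).2
      have h3 := hMpos n
      rw [abs_le]
      constructor <;> simp only [hub] <;> nlinarith
    have huba : ∀ n (a : X₁), ub n a = gs n (φ a) := by
      intro n a
      simp only [hub]
      rw [hwXa n a]
      have hMne : MM n ≠ 0 := (hMpos n).ne'
      field_simp
      ring
    -- extensions over Y
    have hqY : ∀ n, ∃ w : Y → ℝ, Continuous w ∧ (∀ y, w y ∈ Icc (0:ℝ) 1) ∧
        ∀ b : Y₁, w b = (gs n (φ (e.symm b)) + MM n) / (2 * MM n) := by
      intro n
      apply hY₁
      · exact (((hgs_cont n).comp (hφc.comp e.symm.continuous)).add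
          continuous_const).div_const _
      · intro b
        have h1 := abs_le.1 (hgsle n (φ (e.symm b)))
        have h2 := hMpos n
        have h3 : M0 n < MM n := by simp only [hMM]; linarith
        constructor
        · apply div_nonneg _ (by linarith)
          linarith [h1.1]
        · rw [div_le_one (by linarith)]
          linarith [h1.2]
    choose wY hwYc hwY01 hwYa using hqY
    set vb : ℕ → Y → ℝ := fun n y => 2 * MM n * wY n y - MM n with hvb
    have hvbc : ∀ n, Continuous (vb n) :=
      fun n => (continuous_const.mul (hwYc n)).sub continuous_const
    have hvbM : ∀ n y, |vb n y| ≤ MM n := by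
      intro n y
      have h1 := (hwY01 n y).1
      have h2 := (hwY01 n y).2
      have h3 := hMpos n
      rw [abs_le]
      constructor <;> simp only [hvb] <;> nlinarith
    have hvba : ∀ n (b : Y₁), vb n b = gs n (φ (e.symm b)) := by
      intro n b
      simp only [hvb]
      rw [hwYa n b]
      have hMne : MM n ≠ 0 := (hMpos n).ne'
      field_simp
      ring
    -- agreement on E
    have hagree : ∀ p : E, ∀ n, ub n ((p:X×Y)).1 = vb n ((p:X×Y)).2 := by
      intro p n
      have hp : (p : X × Y) ∈ {q : X × Y | ∃ x : X₁, q = ((x:X), ((e x : Y₁) : Y))} := by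
        rw [← hE]; exact p.2
      obtain ⟨x, hx⟩ := hp
      have h1 : ((p:X×Y)).1 = (x:X) := by rw [hx]
      have h2 : ((p:X×Y)).2 = ((e x : Y₁) : Y) := by rw [hx]
      rw [h1, h2, huba n x, hvba n (e x), e.symm_apply_apply]
    -- pointwise convergence on E
    have hγ : ∀ p : E, Tendsto (fun n => ub n ((p:X×Y)).1) atTop (𝓝 (g p)) := by
      intro p
      have hp : (p : X × Y) ∈ {q : X × Y | ∃ x : X₁, q = ((x:X), ((e x : Y₁) : Y))} := by
        rw [← hE]; exact p.2
      obtain ⟨x, hx⟩ := hp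
      have hφx : φ x = p := Subtype.ext hx.symm
      have h1 : ((p:X×Y)).1 = (x:X) := by rw [hx]
      have h2 : ∀ n, ub n ((p:X×Y)).1 = gs n p := by
        intro n
        rw [h1, huba n x, hφx]
      exact (hgs_tendsto p).congr (fun n => (h2 n).symm)
    obtain ⟨f, h1, h2, h3⟩ :=
      aux7 ub vb MM E hubc hvbc hMpos hvbM hagree g hγ hEpc
    exact ⟨f, h1, h2, h3⟩
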